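/- Let p be a prime, χ a nonprincipal multiplicative character of F_p, I = {1, …, H} an interval with H < p, G a multiplicative subgroup of F_p^* of order T, and a ∈ F_p^*. Then |S_χ(a, I, G)|² ≤ p · N(I, G), where S_χ(a, I, G) = Σ_{x ∈ I} Σ_{λ ∈ G} χ(x + aλ) and N(I, G) = #{(x, y, λ) ∈ I × I × G : λ x ≡ y (mod p)}. -/

import Mathlib

open scoped Classical
open Finset
set_option maxHeartbeats 1000000

section Stmt18Aux

variable {p : ℕ} [Fact p.Prime]

lemma aux_norm_chi_eq_one (χ : MulChar (ZMod p) ℂ) {w : ZMod p} (hw : w ≠ 0) : ‖χ w‖ = 1 := by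
  have hp : p.Prime := Fact.out
  have h1 : (χ w) ^ (p - 1) = 1 := by
    rw [← map_pow, ZMod.pow_card_sub_one_eq_one hw, map_one]
  exact Complex.norm_eq_one_of_pow_eq_one h1 (by have := hp.two_le; omega)

lemma aux_norm_chi_le_one (χ : MulChar (ZMod p) ℂ) (w : ZMod p) : ‖χ w‖ ≤ 1 := by
  by_cases hw : w = 0
  · simp [hw, MulChar.map_zero]
  · rw [aux_norm_chi_eq_one χ hw]

lemma aux_conj_chi (χ : MulChar (ZMod p) ℂ) (w : ZMod p) :
    (starRingEnd ℂ) (χ w) = χ w⁻¹ := by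
  rw [← MulChar.inv_apply', ← MulChar.star_apply', starRingEnd_apply]

lemma aux_sum_shift (χ : MulChar (ZMod p) ℂ) (hχ : χ ≠ 1) {e : ZMod p} (he : e ≠ 0) :
    ∑ v : ZMod p, χ (v + e) * (starRingEnd ℂ) (χ v) = -1 := by
  have h1 : ∀ v : ZMod p, χ (v + e) * (starRingEnd ℂ) (χ v) = χ ((v + e) * v⁻¹) := by
    intro v; rw [aux_conj_chi, map_mul]
  simp_rw [h1]
  rw [← Finset.sum_erase_add _ _ (Finset.mem_univ (0 : ZMod p))]
  have h0 : ((0 : ZMod p) + e) * (0 : ZMod p)⁻¹ = 0 := by simp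
  rw [h0, MulChar.map_zero, add_zero]
  have h2 : ∑ v ∈ Finset.univ.erase (0 : ZMod p), χ ((v + e) * v⁻¹)
      = ∑ t ∈ Finset.univ.erase (1 : ZMod p), χ t := by
    refine Finset.sum_bij' (fun v _ => (v + e) * v⁻¹) (fun t _ => e * (t - 1)⁻¹) ?_ ?_ ?_ ?_ ?_
    · intro v hv
      have hv0 : v ≠ 0 := Finset.ne_of_mem_erase hv
      simp only [Finset.mem_erase, Finset.mem_univ, and_true]
      intro h
      apply he
      field_simp at h
      linear_combination h
    · intro t ht
      have ht1 : t ≠ 1 := Finset.ne_of_mem_erase ht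
      simp only [Finset.mem_erase, Finset.mem_univ, and_true]
      exact mul_ne_zero he (inv_ne_zero (sub_ne_zero.mpr ht1))
    · intro v hv
      have hv0 : v ≠ 0 := Finset.ne_of_mem_erase hv
      field_simp
      simp [he]
    · intro t ht
      have ht1 : t ≠ 1 := Finset.ne_of_mem_erase ht
      have h3 : t - 1 ≠ 0 := sub_ne_zero.mpr ht1
      field_simp
      ring
    · intro v hv; rfl
  rw [h2, Finset.sum_erase_eq_sub (Finset.mem_univ (1 : ZMod p)),
    MulChar.sum_eq_zero_of_ne_one hχ, map_one]
  ring

lemma aux_sum_shift' (χ : MulChar (ZMod p) ℂ) (hχ : χ ≠ 1) {c d : ZMod p} (hcd : c ≠ d) :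
    ∑ v : ZMod p, χ (v + c) * (starRingEnd ℂ) (χ (v + d)) = -1 := by
  have key : ∀ v : ZMod p, χ (v + c) * (starRingEnd ℂ) (χ (v + d))
      = (fun w => χ (w + (c - d)) * (starRingEnd ℂ) (χ w)) ((Equiv.addRight d) v) := by
    intro v
    simp only [Equiv.coe_addRight]
    congr 2
    ring
  rw [Fintype.sum_congr _ _ key,
    Fintype.sum_equiv (Equiv.addRight d) _ (fun w => χ (w + (c - d)) * (starRingEnd ℂ) (χ w))
      (fun v => rfl)]
  exact aux_sum_shift χ hχ (sub_ne_zero.mpr hcd)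

end Stmt18Aux


/-- For a nonprincipal multiplicative character `χ` of `𝔽_p`, the interval
`I = {1, ..., H}` with `H < p`, a multiplicative subgroup `G ⊆ 𝔽_p^*` of order `T`,
and `a ∈ 𝔽_p^*`, one has `|S_χ(a, I, G)|² ≤ p · N(I, G)`, where
`S_χ(a, I, G) = ∑_{x ∈ I} ∑_{λ ∈ G} χ(x + aλ)` and
`N(I, G) = #{(x, y, λ) ∈ I × I × G : λ x ≡ y (mod p)}`. -/
theorem stmt_18 (p : ℕ) [Fact p.Prime] (χ : MulChar (ZMod p) ℂ) (hχ : χ ≠ 1)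
    (H : ℕ) (hH : H < p) (T : ℕ) (G : Subgroup (ZMod p)ˣ) (hT : Nat.card G = T)
    (a : (ZMod p)ˣ) :
    ‖∑ x ∈ Finset.Icc 1 H, ∑ l : G,
        χ ((x : ZMod p) + (a : ZMod p) * ((l : (ZMod p)ˣ) : ZMod p))‖ ^ 2
      ≤ (p : ℝ) *
          ((((Finset.Icc 1 H ×ˢ Finset.Icc 1 H) ×ˢ (Finset.univ : Finset G)).filter
            (fun q => ((q.2 : (ZMod p)ˣ) : ZMod p) * (q.1.1 : ZMod p)
              = (q.1.2 : ZMod p))).card : ℝ) := by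
  classical
  have hp : p.Prime := Fact.out
  set S : ℂ := ∑ x ∈ Finset.Icc 1 H, ∑ l : G,
      χ ((x : ZMod p) + (a : ZMod p) * ((l : (ZMod p)ˣ) : ZMod p)) with hS
  set N : ℕ := (((Finset.Icc 1 H ×ˢ Finset.Icc 1 H) ×ˢ (Finset.univ : Finset G)).filter
      (fun q => ((q.2 : (ZMod p)ˣ) : ZMod p) * (q.1.1 : ZMod p)
        = (q.1.2 : ZMod p))).card with hN
  set U : ZMod p → ℂ := fun v => ∑ x ∈ Finset.Icc 1 H, ∑ μ : G,
      (if (x : ZMod p) = v * ((μ : (ZMod p)ˣ) : ZMod p)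
        then χ ((μ : (ZMod p)ˣ) : ZMod p) else 0) with hU
  set V : ZMod p → ℂ := fun v => ∑ l : G,
      χ (v + (a : ZMod p) * ((l : (ZMod p)ˣ) : ZMod p)) with hV
  have hT0 : 0 < T := by
    rw [← hT]; exact Nat.card_pos
  -- the key identity
  have hcard : (Fintype.card G : ℂ) = (T : ℂ) := by
    rw [← hT, Nat.card_eq_fintype_card]
  have hid : ∑ v : ZMod p, U v * V v = (T : ℂ) * S := by
    have step1 : ∀ v : ZMod p, U v * V v = ∑ x ∈ Finset.Icc 1 H, ∑ μ : G,
        (if (x : ZMod p) = v * ((μ : (ZMod p)ˣ) : ZMod p)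
          then χ ((μ : (ZMod p)ˣ) : ZMod p) * V v else 0) := by
      intro v
      rw [hU]
      simp only [Finset.sum_mul, ite_mul, zero_mul]
    simp_rw [step1]
    rw [Finset.sum_comm]
    have step2 : ∀ x : ℕ, (∑ v : ZMod p, ∑ μ : G,
        (if (x : ZMod p) = v * ((μ : (ZMod p)ˣ) : ZMod p)
          then χ ((μ : (ZMod p)ˣ) : ZMod p) * V v else 0))
        = (T : ℂ) * ∑ l : G, χ ((x : ZMod p) + (a : ZMod p) * ((l : (ZMod p)ˣ) : ZMod p)) := by
      intro x
      rw [Finset.sum_comm]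
      have inner : ∀ μ : G, (∑ v : ZMod p,
          (if (x : ZMod p) = v * ((μ : (ZMod p)ˣ) : ZMod p)
            then χ ((μ : (ZMod p)ˣ) : ZMod p) * V v else 0))
          = ∑ l : G, χ ((x : ZMod p) + (a : ZMod p) * (((l * μ : G) : (ZMod p)ˣ) : ZMod p)) := by
        intro μ
        have hcond : ∀ v : ZMod p, ((x : ZMod p) = v * ((μ : (ZMod p)ˣ) : ZMod p))
            ↔ (v = (x : ZMod p) * ((((μ : (ZMod p)ˣ))⁻¹ : (ZMod p)ˣ) : ZMod p)) := by
          intro v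
          rw [Units.eq_mul_inv_iff_mul_eq]
          exact eq_comm
        simp_rw [hcond]
        rw [Finset.sum_ite_eq' Finset.univ
          ((x : ZMod p) * ((((μ : (ZMod p)ˣ))⁻¹ : (ZMod p)ˣ) : ZMod p))]
        simp only [Finset.mem_univ, if_true]
        rw [hV, Finset.mul_sum]
        refine Finset.sum_congr rfl fun l _ => ?_
        rw [← map_mul]
        congr 1
        have hu : ((μ : (ZMod p)ˣ) : ZMod p) * ((((μ : (ZMod p)ˣ))⁻¹ : (ZMod p)ˣ) : ZMod p)
            = 1 := by
          rw [← Units.val_mul, mul_inv_cancel, Units.val_one]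
        have hexp : ((μ : (ZMod p)ˣ) : ZMod p) * ((x : ZMod p)
              * ((((μ : (ZMod p)ˣ))⁻¹ : (ZMod p)ˣ) : ZMod p)
              + (a : ZMod p) * ((l : (ZMod p)ˣ) : ZMod p))
            = (x : ZMod p) * (((μ : (ZMod p)ˣ) : ZMod p)
                * ((((μ : (ZMod p)ˣ))⁻¹ : (ZMod p)ˣ) : ZMod p))
              + (a : ZMod p) * (((l : (ZMod p)ˣ) : ZMod p) * ((μ : (ZMod p)ˣ) : ZMod p)) := by
          ring
        rw [hexp, hu, mul_one]
        push_cast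
        ring
      simp_rw [inner]
      have reidx : ∀ μ : G, (∑ l : G, χ ((x : ZMod p)
            + (a : ZMod p) * (((l * μ : G) : (ZMod p)ˣ) : ZMod p)))
          = ∑ l : G, χ ((x : ZMod p) + (a : ZMod p) * ((l : (ZMod p)ˣ) : ZMod p)) := by
        intro μ
        exact Fintype.sum_equiv (Equiv.mulRight μ) _ _ (fun l => rfl)
      simp_rw [reidx]
      rw [Finset.sum_const, Finset.card_univ, nsmul_eq_mul, hcard]
    simp_rw [step2]
    rw [← Finset.mul_sum, hS]
  -- bound A
  have hA : ∑ v : ZMod p, ‖U v‖ ^ 2 ≤ (T : ℝ) * N := by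
    have hcardR : (Fintype.card G : ℝ) = (T : ℝ) := by rw [← hT, Nat.card_eq_fintype_card]
    set nR : ZMod p → ℝ := fun v => ∑ x ∈ Finset.Icc 1 H, ∑ μ : G,
        (if (x : ZMod p) = v * ((μ : (ZMod p)ˣ) : ZMod p) then (1 : ℝ) else 0) with hnR
    have hUle : ∀ v : ZMod p, ‖U v‖ ≤ nR v := by
      intro v
      simp only [hU, hnR]
      refine (norm_sum_le _ _).trans (Finset.sum_le_sum fun x _ => ?_)
      refine (norm_sum_le _ _).trans (Finset.sum_le_sum fun μ _ => ?_)
      split_ifs with h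
      · exact aux_norm_chi_le_one χ _
      · simp
    have h1 : ∑ v : ZMod p, ‖U v‖ ^ 2 ≤ ∑ v : ZMod p, nR v ^ 2 :=
      Finset.sum_le_sum fun v _ => pow_le_pow_left₀ (norm_nonneg _) (hUle v) 2
    refine h1.trans (le_of_eq ?_)
    have hcond2 : ∀ (x : ℕ) (μ : G) (v : ZMod p),
        ((x : ZMod p) = v * ((μ : (ZMod p)ˣ) : ZMod p))
        ↔ (v = (x : ZMod p) * ((((μ : (ZMod p)ˣ))⁻¹ : (ZMod p)ˣ) : ZMod p)) := by
      intro x μ v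
      rw [Units.eq_mul_inv_iff_mul_eq]
      exact eq_comm
    have hsum2 : ∑ v : ZMod p, nR v ^ 2
        = ∑ x ∈ Finset.Icc 1 H, ∑ y ∈ Finset.Icc 1 H, ∑ μ : G, ∑ ν : G,
            (if (y : ZMod p) = (x : ZMod p) * ((((μ : (ZMod p)ˣ))⁻¹ : (ZMod p)ˣ) : ZMod p)
                * ((ν : (ZMod p)ˣ) : ZMod p) then (1 : ℝ) else 0) := by
      have expand : ∀ v : ZMod p, nR v ^ 2
          = ∑ x ∈ Finset.Icc 1 H, ∑ y ∈ Finset.Icc 1 H, ∑ μ : G, ∑ ν : G,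
            ((if (x : ZMod p) = v * ((μ : (ZMod p)ˣ) : ZMod p) then (1 : ℝ) else 0)
              * (if (y : ZMod p) = v * ((ν : (ZMod p)ˣ) : ZMod p) then (1 : ℝ) else 0)) := by
        intro v
        rw [sq, hnR]
        simp_rw [Finset.sum_mul_sum]
      simp_rw [expand]
      rw [Finset.sum_comm]
      refine Finset.sum_congr rfl fun x _ => ?_
      rw [Finset.sum_comm]
      refine Finset.sum_congr rfl fun y _ => ?_
      rw [Finset.sum_comm]
      refine Finset.sum_congr rfl fun μ _ => ?_
      rw [Finset.sum_comm]
      refine Finset.sum_congr rfl fun ν _ => ?_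
      simp_rw [hcond2 x μ, ite_mul, one_mul, zero_mul]
      rw [Finset.sum_ite_eq' Finset.univ]
      simp only [Finset.mem_univ, if_true]
    rw [hsum2]
    have reidx : ∀ (x y : ℕ) (μ : G), (∑ ν : G,
        (if (y : ZMod p) = (x : ZMod p) * ((((μ : (ZMod p)ˣ))⁻¹ : (ZMod p)ˣ) : ZMod p)
            * ((ν : (ZMod p)ˣ) : ZMod p) then (1 : ℝ) else 0))
        = ∑ l : G, (if ((l : (ZMod p)ˣ) : ZMod p) * (x : ZMod p) = (y : ZMod p)
            then (1 : ℝ) else 0) := by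
      intro x y μ
      refine (Fintype.sum_equiv (Equiv.mulRight μ) _ _ fun l => ?_).symm
      refine if_congr ?_ rfl rfl
      have hcoe : (((l * μ : G) : (ZMod p)ˣ) : ZMod p)
          = ((l : (ZMod p)ˣ) : ZMod p) * ((μ : (ZMod p)ˣ) : ZMod p) := by
        push_cast
        ring
      have hu : ((((μ : (ZMod p)ˣ))⁻¹ : (ZMod p)ˣ) : ZMod p) * ((μ : (ZMod p)ˣ) : ZMod p)
          = 1 := by
        rw [← Units.val_mul, inv_mul_cancel, Units.val_one]
      have harg : (x : ZMod p) * ((((μ : (ZMod p)ˣ))⁻¹ : (ZMod p)ˣ) : ZMod p)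
            * (((l * μ : G) : (ZMod p)ˣ) : ZMod p)
          = ((l : (ZMod p)ˣ) : ZMod p) * (x : ZMod p) := by
        rw [hcoe, show (x : ZMod p) * ((((μ : (ZMod p)ˣ))⁻¹ : (ZMod p)ˣ) : ZMod p)
            * (((l : (ZMod p)ˣ) : ZMod p) * ((μ : (ZMod p)ˣ) : ZMod p))
          = ((l : (ZMod p)ˣ) : ZMod p) * (x : ZMod p)
            * (((((μ : (ZMod p)ˣ))⁻¹ : (ZMod p)ˣ) : ZMod p) * ((μ : (ZMod p)ˣ) : ZMod p))
          from by ring, hu, mul_one]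
      show (((l : (ZMod p)ˣ) : ZMod p) * (x : ZMod p) = (y : ZMod p))
        ↔ ((y : ZMod p) = (x : ZMod p) * ((((μ : (ZMod p)ˣ))⁻¹ : (ZMod p)ˣ) : ZMod p)
            * (((Equiv.mulRight μ) l : (ZMod p)ˣ) : ZMod p))
      rw [show (((Equiv.mulRight μ) l : (ZMod p)ˣ) : ZMod p)
          = (((l * μ : G) : (ZMod p)ˣ) : ZMod p) from rfl, harg]
      exact eq_comm
    simp_rw [reidx]
    have collapse : ∀ c : ℝ, (∑ _μ : G, c) = (T : ℝ) * c := by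
      intro c
      rw [Finset.sum_const, Finset.card_univ, nsmul_eq_mul, hcardR]
    simp_rw [collapse, ← Finset.mul_sum]
    congr 1
    rw [hN, Finset.card_filter, Nat.cast_sum, Finset.sum_product, Finset.sum_product]
    push_cast
    rfl
  -- bound B
  have hB : ∑ v : ZMod p, ‖V v‖ ^ 2 ≤ (T : ℝ) * p := by
    have h1 : ∀ v : ZMod p, ‖V v‖ ^ 2 = (V v * (starRingEnd ℂ) (V v)).re := by
      intro v
      rw [Complex.mul_conj, Complex.ofReal_re, Complex.normSq_eq_norm_sq]
    simp_rw [h1, ← Complex.re_sum]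
    have h2 : ∑ v : ZMod p, V v * (starRingEnd ℂ) (V v)
        = ∑ l : G, ∑ m : G, ∑ v : ZMod p,
            χ (v + (a : ZMod p) * ((l : (ZMod p)ˣ) : ZMod p))
              * (starRingEnd ℂ) (χ (v + (a : ZMod p) * ((m : (ZMod p)ˣ) : ZMod p))) := by
      have expand : ∀ v : ZMod p, V v * (starRingEnd ℂ) (V v)
          = ∑ l : G, ∑ m : G,
              χ (v + (a : ZMod p) * ((l : (ZMod p)ˣ) : ZMod p))
                * (starRingEnd ℂ) (χ (v + (a : ZMod p) * ((m : (ZMod p)ˣ) : ZMod p))) := by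
        intro v
        simp only [hV]
        rw [map_sum, Finset.sum_mul_sum]
      simp_rw [expand]
      rw [Finset.sum_comm]
      exact Finset.sum_congr rfl fun l _ => Finset.sum_comm
    rw [h2]
    simp_rw [Complex.re_sum]
    have hD : ∀ l m : G, (∑ v : ZMod p,
        (χ (v + (a : ZMod p) * ((l : (ZMod p)ˣ) : ZMod p))
          * (starRingEnd ℂ) (χ (v + (a : ZMod p) * ((m : (ZMod p)ˣ) : ZMod p)))).re)
        ≤ (if l = m then (p : ℝ) else 0) := by
      intro l m
      by_cases hlm : l = m
      · subst hlm
        rw [if_pos rfl]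
        have hterm : ∀ v : ZMod p,
            (χ (v + (a : ZMod p) * ((l : (ZMod p)ˣ) : ZMod p))
              * (starRingEnd ℂ) (χ (v + (a : ZMod p) * ((l : (ZMod p)ˣ) : ZMod p)))).re ≤ 1 := by
          intro v
          rw [Complex.mul_conj, Complex.ofReal_re, Complex.normSq_eq_norm_sq]
          have h := aux_norm_chi_le_one χ (v + (a : ZMod p) * ((l : (ZMod p)ˣ) : ZMod p))
          nlinarith [norm_nonneg (χ (v + (a : ZMod p) * ((l : (ZMod p)ˣ) : ZMod p)))]
        refine le_trans (Finset.sum_le_sum fun v _ => hterm v) ?_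
        rw [Finset.sum_const, Finset.card_univ, ZMod.card, nsmul_eq_mul, mul_one]
      · rw [if_neg hlm]
        have ha : (a : ZMod p) ≠ 0 := a.ne_zero
        have hc : ((a : ZMod p) * ((l : (ZMod p)ˣ) : ZMod p))
            ≠ (a : ZMod p) * ((m : (ZMod p)ˣ) : ZMod p) := by
          intro h
          exact hlm (Subtype.ext (Units.ext (mul_left_cancel₀ ha h)))
        rw [← Complex.re_sum, aux_sum_shift' χ hχ hc]
        norm_num
    refine le_trans (Finset.sum_le_sum fun l _ => Finset.sum_le_sum fun m _ => hD l m) ?_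
    have hrow : ∀ l : G, (∑ m : G, (if l = m then (p : ℝ) else 0)) = (p : ℝ) := by
      intro l
      rw [Finset.sum_ite_eq Finset.univ l (fun _ => (p : ℝ)), if_pos (Finset.mem_univ l)]
    simp_rw [hrow]
    rw [Finset.sum_const, Finset.card_univ, nsmul_eq_mul]
    have : (Fintype.card G : ℝ) = (T : ℝ) := by rw [← hT, Nat.card_eq_fintype_card]
    rw [this]
  -- combine
  have hAnn : (0 : ℝ) ≤ ∑ v : ZMod p, ‖U v‖ ^ 2 :=
    Finset.sum_nonneg fun v _ => sq_nonneg _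
  have hNnn : (0 : ℝ) ≤ (T : ℝ) * N := by positivity
  have key : (T : ℝ) ^ 2 * ‖S‖ ^ 2 ≤ (T : ℝ) ^ 2 * ((p : ℝ) * N) := by
    calc (T : ℝ) ^ 2 * ‖S‖ ^ 2 = ‖(T : ℂ) * S‖ ^ 2 := by
          rw [norm_mul, Complex.norm_natCast]; ring
      _ = ‖∑ v : ZMod p, U v * V v‖ ^ 2 := by rw [hid]
      _ ≤ (∑ v : ZMod p, ‖U v‖ * ‖V v‖) ^ 2 := by
          refine pow_le_pow_left₀ (norm_nonneg _) ?_ 2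
          refine (norm_sum_le _ _).trans (le_of_eq ?_)
          simp [norm_mul]
      _ ≤ (∑ v : ZMod p, ‖U v‖ ^ 2) * (∑ v : ZMod p, ‖V v‖ ^ 2) :=
          Finset.sum_mul_sq_le_sq_mul_sq _ _ _
      _ ≤ ((T : ℝ) * N) * ((T : ℝ) * p) := by
          refine mul_le_mul hA hB (Finset.sum_nonneg fun v _ => sq_nonneg _) hNnn
      _ = (T : ℝ) ^ 2 * ((p : ℝ) * N) := by ring
  have hT2 : (0 : ℝ) < (T : ℝ) ^ 2 := by positivity
  exact le_of_mul_le_mul_left key hT2
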